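/- Let f_j ∈ L²(ℝ^d) be a sequence such that ‖f_j‖ ≤ C uniformly in j, and f_j(x) = 0 for all |x| ≥ ρ > 0 and all j. Suppose f_j converges weakly in L²(ℝ^d) to f, and that for some constants A > 0, κ > 0, R₀ > 0 and C > 0, for all R ≥ R₀ one has liminf_{j→∞} ‖f̂_j · χ_R‖ ≥ A − C R^{−κ}, where χ_R is the indicator of the ball {|ξ| < R} and f̂_j is the Fourier transform of f_j. Then ‖f‖ ≥ A. -/

import Mathlib

open MeasureTheory Filter Complex Asymptotics ComplexConjugate
open scoped Topology

noncomputable section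

/-- `ℝᵈ` realized as the Euclidean space. -/
abbrev Ed (d : ℕ) := EuclideanSpace ℝ (Fin d)

/-- The complex Hilbert space `L²(ℝᵈ)`. -/
abbrev L2 (d : ℕ) := MeasureTheory.Lp ℂ 2 (volume : MeasureTheory.Measure (Ed d))

/-- `F` is the unitary Fourier transform on `L²(ℝᵈ)` in the convention
`(𝓕 u)(ξ) = (2π)^{-d/2} ∫ e^{-i ξ·x} u(x) dx`: it is a surjective linear isometry of
`L²(ℝᵈ)`, agreeing on integrable functions with the above integral. -/
def IsPaperFourier {d : ℕ} (F : L2 d ≃ₗᵢ[ℂ] L2 d) : Prop :=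
  ∀ f : L2 d, MeasureTheory.Integrable (⇑f) volume →
    (⇑(F f) : Ed d → ℂ) =ᵐ[volume]
      fun ξ : Ed d => (((2 * Real.pi) ^ (-(d : ℝ) / 2) : ℝ) : ℂ) *
        ∫ x : Ed d, Complex.exp (-Complex.I * ((inner ℝ x ξ : ℝ) : ℂ)) * (⇑f) x

/-- The scalar product `(u, v) = ∫ u(x) conj (v(x)) dx` on `L²(ℝᵈ)` (the convention of the
paper: linear in the first argument). -/
def sesq {d : ℕ} (u v : L2 d) : ℂ := ∫ x : Ed d, (⇑u) x * conj ((⇑v) x)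

/-- The `n`-th eigenvalue (in descending order, counting multiplicity) of a compact
self-adjoint operator `B` on `L²(ℝᵈ)`, via its max-min characterization:
`λ⁽ⁿ⁾ = sup over n-dimensional subspaces M of inf_{u ∈ M, ‖u‖ = 1} ⟨B u, u⟩`. -/
def lamEig {d : ℕ} (B : L2 d → L2 d) (n : ℕ) : ℝ :=
  ⨆ M : {M : Submodule ℂ (L2 d) // Module.finrank ℂ M = n},
    ⨅ u : {u : L2 d // u ∈ M.1 ∧ ‖u‖ = 1}, (sesq (B u.1) u.1).re

/-- The form domain `D[T] = {u ∈ L² : ∫ |ξ|^γ |û|² < ∞, ∫ |x|^β |u|² < ∞}`. -/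
def DTset {d : ℕ} (F : L2 d ≃ₗᵢ[ℂ] L2 d) (γ β : ℝ) : Set (L2 d) :=
  {u : L2 d |
    MeasureTheory.Integrable (fun ξ : Ed d => ‖ξ‖ ^ γ * ‖(⇑(F u)) ξ‖ ^ 2) volume ∧
    MeasureTheory.Integrable (fun x : Ed d => ‖x‖ ^ β * ‖(⇑u) x‖ ^ 2) volume}

/-- The `n`-th min-max value of a quadratic form `Tf` with form domain `DT`:
`μ⁽ⁿ⁾ = inf over n-dimensional subspaces M ⊆ DT of sup_{u ∈ M, ‖u‖ = 1} Tf u`. -/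
def muVal {d : ℕ} (DT : Set (L2 d)) (Tf : L2 d → ℝ) (n : ℕ) : ℝ :=
  ⨅ M : {M : Submodule ℂ (L2 d) // Module.finrank ℂ M = n ∧ (M : Set (L2 d)) ⊆ DT},
    ⨆ u : {u : L2 d // u ∈ M.1 ∧ ‖u‖ = 1}, Tf u.1

lemma inner_c (z : ℂ) : RCLike.re (inner ℂ z z : ℂ) = ‖z‖^2 := by
  rw [@inner_self_eq_norm_sq ℂ]

lemma L2sq_int (d : ℕ) (u : L2 d) : Integrable (fun x => ‖(⇑u) x‖^2) := by
  have := (MeasureTheory.L2.integrable_inner (𝕜 := ℂ) u u).re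
  exact this.congr (Filter.Eventually.of_forall fun x => inner_c _)

lemma L2norm_sq (d : ℕ) (u : L2 d) : ‖u‖^2 = ∫ x, ‖(⇑u) x‖^2 := by
  have h2 : (‖u‖:ℝ)^2 = RCLike.re (inner ℂ u u : ℂ) := (@inner_self_eq_norm_sq ℂ _ _ _ _ u).symm
  rw [h2, MeasureTheory.L2.inner_def, ← integral_re (MeasureTheory.L2.integrable_inner u u)]
  exact integral_congr_ae (Filter.Eventually.of_forall fun x => inner_c _)
lemma sesq_eq (d : ℕ) (u v : L2 d) : sesq u v = conj (inner ℂ u v : ℂ) := by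
  rw [MeasureTheory.L2.inner_def, ← integral_conj, sesq]
  congr 1; ext x
  simp [RCLike.inner_apply, mul_comm]

lemma sesq_bound (d : ℕ) (u v : L2 d) : ‖sesq u v‖ ≤ ‖u‖ * ‖v‖ := by
  rw [sesq_eq, RCLike.norm_conj]
  exact norm_inner_le_norm (𝕜 := ℂ) u v

-- integrability of a.e.-compactly-supported L2 function
lemma L2_integrable_of_supp (d : ℕ) (u : L2 d) (ρ : ℝ)
    (h : ∀ᵐ x : Ed d ∂volume, ρ ≤ ‖x‖ → (⇑u) x = 0) : Integrable (⇑u) volume := by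
  have hball : MeasurableSet (Metric.closedBall (0:Ed d) ρ) := measurableSet_closedBall
  have heq : (⇑u) =ᵐ[volume] (Metric.closedBall (0:Ed d) ρ).indicator (⇑u) := by
    filter_upwards [h] with x hx
    by_cases hmem : x ∈ Metric.closedBall (0:Ed d) ρ
    · rw [Set.indicator_of_mem hmem]
    · rw [Set.indicator_of_notMem hmem]
      exact hx (le_of_lt (by simpa [Metric.mem_closedBall, dist_zero_right, not_le] using hmem))
  have hmem2 : MemLp ((Metric.closedBall (0:Ed d) ρ).indicator (⇑u)) 2 volume :=
    (MeasureTheory.Lp.memLp u).indicator hball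
  have hfin : IsFiniteMeasure (volume.restrict (Metric.closedBall (0:Ed d) ρ)) := by
    constructor
    rw [Measure.restrict_apply_univ]
    exact MeasureTheory.measure_closedBall_lt_top
  rw [MeasureTheory.memLp_indicator_iff_restrict hball] at hmem2
  have : Integrable (⇑u) (volume.restrict (Metric.closedBall (0:Ed d) ρ)) :=
    hmem2.integrable (by norm_num)
  have h2 : Integrable ((Metric.closedBall (0:Ed d) ρ).indicator (⇑u)) volume :=
    (integrable_indicator_iff hball).mpr this
  exact (integrable_congr heq.symm).mp h2

variable {d : ℕ}

lemma expfun_memL2 (ρ : ℝ) (ξ : Ed d) :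
    MemLp ((Metric.closedBall (0:Ed d) ρ).indicator
      (fun x : Ed d => Complex.exp (Complex.I * ((inner ℝ x ξ : ℝ) : ℂ)))) 2 volume := by
  have hball : MeasurableSet (Metric.closedBall (0:Ed d) ρ) := measurableSet_closedBall
  rw [MeasureTheory.memLp_indicator_iff_restrict hball]
  have hfin : IsFiniteMeasure (volume.restrict (Metric.closedBall (0:Ed d) ρ)) :=
    ⟨by rw [Measure.restrict_apply_univ]; exact MeasureTheory.measure_closedBall_lt_top⟩
  have hcont : Continuous (fun x : Ed d => Complex.exp (Complex.I * ((inner ℝ x ξ : ℝ) : ℂ))) := by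
    exact Complex.continuous_exp.comp ((continuous_const.mul
      (Complex.continuous_ofReal.comp (Continuous.inner continuous_id continuous_const))))
  refine MemLp.of_bound hcont.aestronglyMeasurable 1 (Filter.Eventually.of_forall fun x => ?_)
  rw [Complex.norm_exp]
  simp

def gfun (ρ : ℝ) (ξ : Ed d) : L2 d := (expfun_memL2 ρ ξ).toLp _

lemma formula_eq_sesq (ρ : ℝ) (u : L2 d)
    (hu : ∀ᵐ x : Ed d ∂volume, ρ ≤ ‖x‖ → (⇑u) x = 0) (ξ : Ed d) :
    (∫ x : Ed d, Complex.exp (-Complex.I * ((inner ℝ x ξ : ℝ) : ℂ)) * (⇑u) x)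
      = sesq u (gfun ρ ξ) := by
  rw [sesq]
  refine integral_congr_ae ?_
  filter_upwards [hu, (expfun_memL2 ρ ξ).coeFn_toLp] with x hx hg
  rw [show (⇑(gfun ρ ξ)) x = _ from hg]
  by_cases hmem : x ∈ Metric.closedBall (0:Ed d) ρ
  · rw [Set.indicator_of_mem hmem, ← Complex.exp_conj]
    rw [map_mul, Complex.conj_I, Complex.conj_ofReal, mul_comm]
  · rw [Set.indicator_of_notMem hmem, map_zero, mul_zero,
      hx (le_of_lt (by simpa [Metric.mem_closedBall, dist_zero_right, not_le] using hmem)),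
      mul_zero]

lemma gfun_norm_le (ρ : ℝ) (ξ : Ed d) :
    ‖gfun ρ ξ‖ ≤ Real.sqrt ((volume (Metric.closedBall (0:Ed d) ρ)).toReal) := by
  have h1 : ‖gfun ρ ξ‖^2 ≤ (volume (Metric.closedBall (0:Ed d) ρ)).toReal := by
    rw [L2norm_sq]
    have hint : Integrable ((Metric.closedBall (0:Ed d) ρ).indicator (fun _ : Ed d => (1:ℝ)))
        volume := (integrable_indicator_iff measurableSet_closedBall).mpr
      (integrableOn_const MeasureTheory.measure_closedBall_lt_top.ne)
    have h2 : ∫ x, ‖(⇑(gfun ρ ξ)) x‖^2 ≤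
        ∫ x, (Metric.closedBall (0:Ed d) ρ).indicator (fun _ => (1:ℝ)) x := by
      refine integral_mono_ae ((L2sq_int d _)) hint ?_
      filter_upwards [(expfun_memL2 ρ ξ).coeFn_toLp] with x hg
      rw [show (⇑(gfun ρ ξ)) x = _ from hg]
      by_cases hmem : x ∈ Metric.closedBall (0:Ed d) ρ
      · rw [Set.indicator_of_mem hmem, Set.indicator_of_mem hmem]
        rw [Complex.norm_exp]
        simp
      · simp [Set.indicator_of_notMem hmem]
    refine h2.trans ?_
    rw [integral_indicator measurableSet_closedBall]
    simp [Measure.restrict_apply_univ]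
    exact le_rfl
  have := Real.sqrt_le_sqrt h1
  rwa [Real.sqrt_sq (norm_nonneg _)] at this

lemma flim_supp (ρ : ℝ) (f : ℕ → L2 d) (flim : L2 d)
    (hsupp : ∀ j : ℕ, ∀ᵐ x : Ed d ∂(volume : Measure (Ed d)), ρ ≤ ‖x‖ → (⇑(f j)) x = 0)
    (hweak : ∀ g : L2 d, Tendsto (fun j : ℕ => sesq (f j) g) atTop (nhds (sesq flim g))) :
    ∀ᵐ x : Ed d ∂volume, ρ ≤ ‖x‖ → (⇑flim) x = 0 := by
  set s : Set (Ed d) := {x | ρ ≤ ‖x‖} with hs_def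
  have hs : MeasurableSet s :=
    (isClosed_le continuous_const continuous_norm).measurableSet
  set g : L2 d := ((MeasureTheory.Lp.memLp flim).indicator hs).toLp _ with hg_def
  have hgco : (⇑g) =ᵐ[volume] s.indicator (⇑flim) :=
    ((MeasureTheory.Lp.memLp flim).indicator hs).coeFn_toLp
  have hzero : ∀ j, sesq (f j) g = 0 := by
    intro j
    rw [sesq]
    rw [integral_eq_zero_of_ae ?_]
    filter_upwards [hsupp j, hgco] with x hx hgx
    by_cases hmem : x ∈ s
    · rw [hx hmem, zero_mul]; rfl
    · rw [hgx, Set.indicator_of_notMem hmem, map_zero, mul_zero]; rfl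
  have h0 : sesq flim g = 0 := by
    refine tendsto_nhds_unique (hweak g) ?_
    rw [show (fun j => sesq (f j) g) = fun _ => (0:ℂ) from funext hzero]
    exact tendsto_const_nhds
  have hcongr : sesq flim g = ((∫ x, s.indicator (fun x => ‖(⇑flim) x‖^2) x : ℝ) : ℂ) := by
    have h1 : (∫ x : Ed d, (⇑flim) x * conj ((⇑g) x))
        = ∫ x : Ed d, ((s.indicator (fun x => ‖(⇑flim) x‖^2) x : ℝ) : ℂ) := by
      refine integral_congr_ae ?_
      filter_upwards [hgco] with x hgx
      rw [hgx]
      by_cases hmem : x ∈ s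
      · rw [Set.indicator_of_mem hmem, Set.indicator_of_mem hmem, Complex.mul_conj,
          Complex.normSq_eq_norm_sq]
      · rw [Set.indicator_of_notMem hmem, Set.indicator_of_notMem hmem, map_zero, mul_zero]
        norm_cast
    rw [sesq, h1]
    exact integral_ofReal (𝕜 := ℂ)
  have hint : Integrable (s.indicator (fun x => ‖(⇑flim) x‖^2)) volume :=
    (L2sq_int d flim).indicator hs
  have : ∫ x, s.indicator (fun x => ‖(⇑flim) x‖^2) x = 0 := by
    have := hcongr.symm.trans h0
    exact_mod_cast this
  have hae : s.indicator (fun x => ‖(⇑flim) x‖^2) =ᵐ[volume] 0 := by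
    refine (integral_eq_zero_iff_of_nonneg ?_ hint).mp this
    intro x
    simp only [Pi.zero_apply]
    exact Set.indicator_nonneg (fun y _ => by positivity) x
  filter_upwards [hae] with x hx hρx
  have : s.indicator (fun x => ‖(⇑flim) x‖^2) x = 0 := hx
  rw [Set.indicator_of_mem (show x ∈ s from hρx)] at this
  simpa using (pow_eq_zero_iff (by norm_num)).mp this

/-- (Proposition on weak limits.) If `f_j ∈ L²(ℝᵈ)` with `‖f_j‖ ≤ C`,
`f_j = 0` a.e. outside the ball of radius `ρ > 0`, `f_j ⇀ f` weakly, and for all `R ≥ R₀`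
`liminf_j ‖f̂_j χ_R‖ ≥ A - C' R^{-κ}` with `A > 0`, `κ > 0`, then `‖f‖ ≥ A`. -/
theorem stmt_15 (d : ℕ) (hd : 1 ≤ d)
    (F : L2 d ≃ₗᵢ[ℂ] L2 d) (hF : IsPaperFourier F)
    (f : ℕ → L2 d) (flim : L2 d)
    (C ρ : ℝ) (hρ : 0 < ρ)
    (hbdd : ∀ j : ℕ, ‖f j‖ ≤ C)
    (hsupp : ∀ j : ℕ, ∀ᵐ x : Ed d ∂(volume : Measure (Ed d)), ρ ≤ ‖x‖ → (⇑(f j)) x = 0)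
    (hweak : ∀ g : L2 d,
      Tendsto (fun j : ℕ => sesq (f j) g) atTop (𝓝 (sesq flim g)))
    (A κ R₀ C' : ℝ) (hA : 0 < A) (hκ : 0 < κ) (hR₀ : 0 < R₀)
    (hlim : ∀ R : ℝ, R₀ ≤ R →
      A - C' * R ^ (-κ) ≤ Filter.liminf
        (fun j : ℕ =>
          Real.sqrt (∫ ξ in Metric.ball (0 : Ed d) R, ‖(⇑(F (f j))) ξ‖ ^ 2)) atTop) :
    A ≤ ‖flim‖ := by
  set c : ℝ := (2 * Real.pi) ^ (-(d : ℝ) / 2) with hc_def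
  have hc : 0 ≤ c := Real.rpow_nonneg (by positivity) _
  have hC : 0 ≤ C := (norm_nonneg (f 0)).trans (hbdd 0)
  set V : ℝ := Real.sqrt ((volume (Metric.closedBall (0:Ed d) ρ)).toReal) with hV_def
  have hV : 0 ≤ V := Real.sqrt_nonneg _
  set M : ℝ := c * C * V with hM_def
  have hM : 0 ≤ M := by positivity
  -- integrability and support of flim
  have hsuppl : ∀ᵐ x : Ed d ∂volume, ρ ≤ ‖x‖ → (⇑flim) x = 0 := flim_supp ρ f flim hsupp hweak
  have hintj : ∀ j, Integrable (⇑(f j)) volume := fun j => L2_integrable_of_supp d (f j) ρ (hsupp j)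
  have hintl : Integrable (⇑flim) volume := L2_integrable_of_supp d flim ρ hsuppl
  -- a.e. identity : F u = c * sesq u gξ
  have hform : ∀ u : L2 d, (∀ᵐ x : Ed d ∂volume, ρ ≤ ‖x‖ → (⇑u) x = 0) →
      Integrable (⇑u) volume →
      ∀ᵐ ξ : Ed d ∂volume, (⇑(F u)) ξ = (c:ℂ) * sesq u (gfun ρ ξ) := by
    intro u hu hui
    filter_upwards [hF u hui] with ξ hξ
    rw [hξ, formula_eq_sesq ρ u hu ξ]
  -- bound on sesq
  have hsesq_bd : ∀ u : L2 d, ‖u‖ ≤ C → ∀ ξ : Ed d, ‖(c:ℂ) * sesq u (gfun ρ ξ)‖ ≤ M := by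
    intro u hu ξ
    rw [norm_mul, Complex.norm_real, Real.norm_of_nonneg hc, hM_def, mul_assoc]
    exact mul_le_mul_of_nonneg_left
      ((sesq_bound d u _).trans (mul_le_mul hu (gfun_norm_le ρ ξ) (norm_nonneg _) hC)) hc
  -- the DCT step
  have hDCT : ∀ R : ℝ,
      Tendsto (fun j => ∫ ξ in Metric.ball (0:Ed d) R, ‖(⇑(F (f j))) ξ‖ ^ 2) atTop
        (nhds (∫ ξ in Metric.ball (0:Ed d) R, ‖(⇑(F flim)) ξ‖ ^ 2)) := by
    intro R
    have hfin : IsFiniteMeasure ((volume : Measure (Ed d)).restrict (Metric.ball 0 R)) :=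
      ⟨by rw [Measure.restrict_apply_univ]; exact measure_ball_lt_top⟩
    refine tendsto_integral_of_dominated_convergence (fun _ => M ^ 2)
      (fun n => ?_) (integrable_const _) (fun n => ?_) ?_
    · exact (((MeasureTheory.Lp.aestronglyMeasurable (F (f n))).norm.pow 2).restrict)
    · refine ae_restrict_of_ae ?_
      filter_upwards [hform (f n) (hsupp n) (hintj n)] with ξ hξ
      rw [Real.norm_of_nonneg (by positivity)]
      exact pow_le_pow_left₀ (norm_nonneg _) (by rw [hξ]; exact hsesq_bd (f n) (hbdd n) ξ) 2
    · refine ae_restrict_of_ae ?_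
      have hall : ∀ᵐ ξ : Ed d ∂volume, (∀ n, (⇑(F (f n))) ξ = (c:ℂ) * sesq (f n) (gfun ρ ξ)) ∧
          (⇑(F flim)) ξ = (c:ℂ) * sesq flim (gfun ρ ξ) := by
        refine (ae_all_iff.mpr (fun n => hform (f n) (hsupp n) (hintj n))).and
          (hform flim hsuppl hintl)
      filter_upwards [hall] with ξ ⟨hn, hl⟩
      have h1 : Tendsto (fun j => (c:ℂ) * sesq (f j) (gfun ρ ξ)) atTop
          (nhds ((c:ℂ) * sesq flim (gfun ρ ξ))) := (hweak (gfun ρ ξ)).const_mul _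
      have h2 := (h1.norm).pow 2
      simp only [hn, hl]
      exact h2
  -- conclude for each R ≥ R₀
  have key : ∀ R : ℝ, R₀ ≤ R → A - C' * R ^ (-κ) ≤ ‖flim‖ := by
    intro R hR
    have hlf : Filter.liminf (fun j : ℕ =>
        Real.sqrt (∫ ξ in Metric.ball (0 : Ed d) R, ‖(⇑(F (f j))) ξ‖ ^ 2)) atTop
        = Real.sqrt (∫ ξ in Metric.ball (0:Ed d) R, ‖(⇑(F flim)) ξ‖ ^ 2) := by
      exact ((Real.continuous_sqrt.tendsto _).comp (hDCT R)).liminf_eq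
    have h3 : Real.sqrt (∫ ξ in Metric.ball (0:Ed d) R, ‖(⇑(F flim)) ξ‖ ^ 2) ≤ ‖flim‖ := by
      have hle : (∫ ξ in Metric.ball (0:Ed d) R, ‖(⇑(F flim)) ξ‖ ^ 2)
          ≤ ∫ ξ, ‖(⇑(F flim)) ξ‖ ^ 2 :=
        setIntegral_le_integral (L2sq_int d (F flim))
          (Filter.Eventually.of_forall fun x => by positivity)
      have := Real.sqrt_le_sqrt hle
      rwa [← L2norm_sq, Real.sqrt_sq (norm_nonneg _), F.norm_map] at this
    calc A - C' * R ^ (-κ) ≤ _ := hlim R hR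
      _ ≤ ‖flim‖ := by rw [hlf]; exact h3
  have htend : Tendsto (fun R : ℝ => A - C' * R ^ (-κ)) atTop (nhds (A - C' * 0)) :=
    tendsto_const_nhds.sub ((tendsto_rpow_neg_atTop hκ).const_mul C')
  have := le_of_tendsto htend (Filter.eventually_atTop.mpr ⟨R₀, key⟩)
  simpa using this
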